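/- Let A and B be non-trivial groups, and suppose it is not the case that both A and B have exactly two elements. Then the free product A * B contains a non-abelian free subgroup; that is, there exists an injective group homomorphism from the free group of rank 2 into A * B. -/

import Mathlib

open Monoid

namespace FreeProductF2Aux

variable {ι : Type*} {M : ι → Type*} [∀ i, Group (M i)] [DecidableEq ι] [∀ i, DecidableEq (M i)]

theorem toList_of_smul {i : ι} (m : M i) (hm : m ≠ 1) (w : CoprodI.Word M)
    (hw : w.fstIdx ≠ some i) :
    (CoprodI.of m • w).toList = ⟨i, m⟩ :: w.toList := by
  rw [← CoprodI.Word.cons_eq_smul (m := m) (ls := w) (h1 := hw) (h2 := hm)]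
  rfl

theorem head?_of_smul {i : ι} (m : M i) (hm : m ≠ 1) (w : CoprodI.Word M)
    (hw : w.fstIdx ≠ some i) :
    (CoprodI.of m • w).toList.head? = some ⟨i, m⟩ := by
  rw [toList_of_smul m hm w hw]; rfl

theorem fstIdx_of_smul {i : ι} (m : M i) (hm : m ≠ 1) (w : CoprodI.Word M)
    (hw : w.fstIdx ≠ some i) :
    (CoprodI.of m • w).fstIdx = some i := by
  rw [CoprodI.Word.fstIdx, head?_of_smul m hm w hw]; rfl

theorem word_cases (w : CoprodI.Word M) :
    w = CoprodI.Word.empty ∨ ∃ (i : ι) (m : M i) (w' : CoprodI.Word M),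
      m ≠ 1 ∧ w'.fstIdx ≠ some i ∧ w = CoprodI.of m • w' := by
  induction w using CoprodI.Word.consRecOn with
  | empty => exact Or.inl rfl
  | cons i m w h1 h2 _ => exact Or.inr ⟨i, m, w, h2, h1, CoprodI.Word.cons_eq_smul⟩

theorem key {i j : ι} (hij : i ≠ j) (p : M i) (q : M j) (hp : p ≠ 1) (hq : q ≠ 1)
    (w : CoprodI.Word M)
    (hw : w.toList.take 2 ≠ [⟨j, q⟩, ⟨i, p⟩]) :
    ((CoprodI.of p * CoprodI.of q * (CoprodI.of p)⁻¹ * (CoprodI.of q)⁻¹) • w).toList.take 2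
      = [⟨i, p⟩, ⟨j, q⟩] := by
  obtain ⟨w₁, hw₁, h₁⟩ : ∃ w₁ : CoprodI.Word M, (CoprodI.of q)⁻¹ • w = w₁ ∧
      w₁.toList.head? ≠ some ⟨i, p⟩ := by
    rcases word_cases w with rfl | ⟨k, m, w', hm, hfst, rfl⟩
    · refine ⟨_, rfl, ?_⟩
      rw [← map_inv, head?_of_smul q⁻¹ (inv_ne_one.mpr hq) _ (by simp [CoprodI.Word.fstIdx])]
      simp only [ne_eq, Option.some.injEq]
      intro hcontr
      exact hij (congrArg Sigma.fst hcontr).symm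
    · by_cases hkj : k = j
      · subst hkj
        by_cases hmq : m = q
        · subst hmq
          refine ⟨w', inv_smul_smul _ _, ?_⟩
          intro hcontr
          apply hw
          rw [toList_of_smul m hm w' hfst]
          rcases hl : w'.toList with _ | ⟨l, t⟩
          · rw [hl] at hcontr; simp at hcontr
          · rw [hl] at hcontr
            simp only [List.head?_cons, Option.some.injEq] at hcontr
            subst hcontr
            rfl
        · refine ⟨CoprodI.of (q⁻¹ * m) • w', ?_, ?_⟩
          · rw [← map_inv, smul_smul, ← map_mul]
          · rw [head?_of_smul _ (by rw [ne_eq, inv_mul_eq_one]; exact fun h => hmq h.symm) _ hfst]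
            simp only [ne_eq, Option.some.injEq]
            intro hcontr
            exact hij (congrArg Sigma.fst hcontr).symm
      · refine ⟨_, rfl, ?_⟩
        rw [← map_inv, head?_of_smul q⁻¹ (inv_ne_one.mpr hq) _ ?_]
        · simp only [ne_eq, Option.some.injEq]
          intro hcontr
          exact hij (congrArg Sigma.fst hcontr).symm
        · rw [fstIdx_of_smul m hm w' hfst]
          simp [hkj]
  obtain ⟨w₂, hw₂, h₂⟩ : ∃ w₂ : CoprodI.Word M, (CoprodI.of p)⁻¹ • w₁ = w₂ ∧
      w₂.fstIdx = some i := by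
    rcases word_cases w₁ with rfl | ⟨k, m, w', hm, hfst, rfl⟩
    · exact ⟨_, rfl, by
        rw [← map_inv, fstIdx_of_smul p⁻¹ (inv_ne_one.mpr hp) _ (by simp [CoprodI.Word.fstIdx])]⟩
    · by_cases hki : k = i
      · subst hki
        have hmp : m ≠ p := by
          intro hcontr; subst hcontr
          exact h₁ (head?_of_smul m hm w' hfst)
        refine ⟨CoprodI.of (p⁻¹ * m) • w', by rw [← map_inv, smul_smul, ← map_mul], ?_⟩
        exact fstIdx_of_smul _ (by rw [ne_eq, inv_mul_eq_one]; exact fun h => hmp h.symm) _ hfst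
      · refine ⟨_, rfl, ?_⟩
        rw [← map_inv, fstIdx_of_smul p⁻¹ (inv_ne_one.mpr hp) _ ?_]
        rw [fstIdx_of_smul m hm w' hfst]
        simp [hki]
  have hfq : w₂.fstIdx ≠ some j := by rw [h₂]; simp [hij]
  have hrw : (CoprodI.of p * CoprodI.of q * (CoprodI.of p)⁻¹ * (CoprodI.of q)⁻¹) • w
      = CoprodI.of p • CoprodI.of q • w₂ := by
    rw [← hw₂, ← hw₁, ← smul_smul, ← smul_smul, ← smul_smul]
  have h3 : (CoprodI.of q • w₂).fstIdx ≠ some i := by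
    rw [fstIdx_of_smul q hq _ hfq]
    simp [Ne.symm hij]
  rw [hrw, toList_of_smul p hp _ h3, toList_of_smul q hq _ hfq]
  rfl

theorem free_pair {M : Bool → Type} [∀ i, Group (M i)]
    (p : Fin 2 → M true) (q : M false) (hp : ∀ t, p t ≠ 1) (hq : q ≠ 1)
    (hinj : Function.Injective p) :
    Function.Injective (FreeGroup.lift fun t =>
      CoprodI.of (p t) * CoprodI.of q * (CoprodI.of (p t))⁻¹ * (CoprodI.of q)⁻¹) := by
  classical
  let X : Fin 2 → Set (CoprodI.Word M) :=
    fun t => {w | w.toList.take 2 = [⟨true, p t⟩, ⟨false, q⟩]}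
  let Y : Fin 2 → Set (CoprodI.Word M) :=
    fun t => {w | w.toList.take 2 = [⟨false, q⟩, ⟨true, p t⟩]}
  apply FreeGroup.injective_lift_of_ping_pong _ X Y
  · intro t
    refine ⟨CoprodI.Word.cons (p t)
      (CoprodI.Word.cons q CoprodI.Word.empty (by simp [CoprodI.Word.fstIdx]) hq)
      (by simp) (hp t), ?_⟩
    simp [X, CoprodI.Word.cons]
  · intro s t hst
    rw [Function.onFun, Set.disjoint_left]
    intro w hws hwt
    simp only [X, Set.mem_setOf_eq] at hws hwt
    have h' := hws.symm.trans hwt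
    apply hst
    apply hinj
    simpa using h'
  · intro s t hst
    rw [Function.onFun, Set.disjoint_left]
    intro w hws hwt
    simp only [Y, Set.mem_setOf_eq] at hws hwt
    have h' := hws.symm.trans hwt
    apply hst
    apply hinj
    simpa using h'
  · intro s t
    rw [Set.disjoint_left]
    intro w hws hwt
    simp only [X, Y, Set.mem_setOf_eq] at hws hwt
    have h' := hws.symm.trans hwt
    simp at h'
  · intro t
    rintro x ⟨w, hw, rfl⟩
    exact key (by simp) (p t) q (hp t) hq w hw
  · intro t
    rintro x ⟨w, hw, rfl⟩
    have hrw : (CoprodI.of (p t) * CoprodI.of q * (CoprodI.of (p t))⁻¹ * (CoprodI.of q)⁻¹)⁻¹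
        = CoprodI.of q * CoprodI.of (p t) * (CoprodI.of q)⁻¹ * (CoprodI.of (p t))⁻¹ := by
      group
    show _ ∈ Y t
    simp only [Pi.inv_apply, hrw]
    exact key (by simp) q (p t) hq (hp t) w hw

theorem two_elts {A : Type} [Group A] [Nontrivial A] (h : Nat.card A ≠ 2) :
    ∃ a₁ a₂ : A, a₁ ≠ 1 ∧ a₂ ≠ 1 ∧ a₁ ≠ a₂ := by
  obtain ⟨a, ha⟩ := exists_ne (1 : A)
  by_contra hcon
  push_neg at hcon
  apply h
  rw [Nat.card_eq_two_iff]
  refine ⟨1, a, Ne.symm ha, ?_⟩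
  ext x
  simp only [Set.mem_insert_iff, Set.mem_singleton_iff, Set.mem_univ, iff_true]
  by_cases hx : x = 1
  · exact Or.inl hx
  · exact Or.inr (hcon x a hx ha)

/-- The two-element family of groups `true ↦ A`, `false ↦ B`. -/
abbrev M2 (A B : Type) : Bool → Type := fun t => Bool.rec B A t

instance {A B : Type} [Group A] [Group B] (t : Bool) : Group (M2 A B t) :=
  Bool.rec (inferInstanceAs (Group B)) (inferInstanceAs (Group A)) t

theorem embed {A B : Type} [Group A] [Group B]
    (hA : ∃ a₁ a₂ : A, a₁ ≠ 1 ∧ a₂ ≠ 1 ∧ a₁ ≠ a₂) (hB : ∃ b : B, b ≠ 1) :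
    ∃ f : FreeGroup (Fin 2) →* Monoid.Coprod A B, Function.Injective f := by
  obtain ⟨a₁, a₂, h1, h2, h12⟩ := hA
  obtain ⟨b, hb⟩ := hB
  have hp : ∀ s : Fin 2, (if s = 0 then a₁ else a₂) ≠ (1 : A) := by
    intro s; fin_cases s <;> simp [h1, h2]
  have hpi : Function.Injective (fun s : Fin 2 => if s = 0 then a₁ else a₂) := by
    intro s t hst
    fin_cases s <;> fin_cases t <;> simp_all
  have hfree := free_pair (M := M2 A B)
    (p := fun s => if s = 0 then a₁ else a₂) (q := b) hp hb hpi
  let φ : CoprodI (M2 A B) →* Monoid.Coprod A B :=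
    CoprodI.lift fun t => Bool.rec (motive := fun t => M2 A B t →* Monoid.Coprod A B)
      Coprod.inr Coprod.inl t
  let ψ : Monoid.Coprod A B →* CoprodI (M2 A B) :=
    Coprod.lift (CoprodI.of (M := M2 A B) (i := true)) (CoprodI.of (M := M2 A B) (i := false))
  have hψφ : ∀ x, ψ (φ x) = x := by
    intro x
    have hcomp : ψ.comp φ = MonoidHom.id _ := by
      apply CoprodI.ext_hom
      intro t
      cases t <;> ext y <;>
        simp [φ, ψ, CoprodI.lift_of, Coprod.lift_apply_inl, Coprod.lift_apply_inr]
    exact DFunLike.congr_fun hcomp x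
  exact ⟨φ.comp (FreeGroup.lift _), (Function.LeftInverse.injective hψφ).comp hfree⟩

end FreeProductF2Aux

/-- If `A` and `B` are non-trivial groups and not both of them have exactly two elements,
then the free product `A * B` contains a non-abelian free subgroup: there is an
injective homomorphism from the free group of rank `2` into `A * B`. -/
theorem free_product_contains_nonabelian_free_subgroup
    {A B : Type} [Group A] [Group B] [Nontrivial A] [Nontrivial B]
    (h : ¬(Nat.card A = 2 ∧ Nat.card B = 2)) :
    ∃ f : FreeGroup (Fin 2) →* Monoid.Coprod A B, Function.Injective f := by
  rcases not_and_or.mp h with hA | hB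
  · exact FreeProductF2Aux.embed (FreeProductF2Aux.two_elts hA) (exists_ne 1)
  · obtain ⟨f, hf⟩ := FreeProductF2Aux.embed (A := B) (B := A)
      (FreeProductF2Aux.two_elts hB) (exists_ne 1)
    have hswap : Function.Injective (Monoid.Coprod.swap B A) :=
      Function.LeftInverse.injective (g := Monoid.Coprod.swap A B)
        (fun x => DFunLike.congr_fun (Monoid.Coprod.swap_comp_swap (M := A) (N := B)) x)
    exact ⟨(Monoid.Coprod.swap B A).comp f, hswap.comp hf⟩
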